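/- In the linear Anderson mixing setup, let s > 1 and suppose rank(R_j) = j holds for all 1 ≤ j < s but rank(R_s) < s. Then Anderson mixing stagnates: for every minimizer Γ_s of Γ ↦ ‖r_s − R_sΓ‖₂, one has x_s − X_sΓ_s = x̄_{s−1}; in particular x̄_s = x̄_{s−1}. -/

import Mathlib

open Matrix

/-- The Euclidean (ℓ₂) norm of a vector in `ℝ^n`. -/
noncomputable def norm2 {n : ℕ} (v : Fin n → ℝ) : ℝ := Real.sqrt (∑ i, v i ^ 2)

/-- The residual `r(x) = b − Ax`. -/
def resid {d : ℕ} (A : Matrix (Fin d) (Fin d) ℝ) (b : Fin d → ℝ) (x : Fin d → ℝ) :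
    Fin d → ℝ := b - A.mulVec x

/-- The matrix whose columns are the first `j` forward differences of the sequence `v`. -/
def diffMat {d : ℕ} (v : ℕ → Fin d → ℝ) (j : ℕ) : Matrix (Fin d) (Fin j) ℝ :=
  Matrix.of fun i (l : Fin j) => v ((l : ℕ) + 1) i - v (l : ℕ) i

lemma sumsq_le_of_norm2_le {n : ℕ} {a c : Fin n → ℝ} (h : norm2 a ≤ norm2 c) :
    ∑ i, a i ^ 2 ≤ ∑ i, c i ^ 2 := by
  have hc : (0:ℝ) ≤ ∑ i, c i ^ 2 := by positivity
  exact (Real.sqrt_le_sqrt_iff hc).mp h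

lemma ls_orth {d j : ℕ} (M : Matrix (Fin d) (Fin j) ℝ) (v : Fin d → ℝ) (G : Fin j → ℝ)
    (h : ∀ G', norm2 (v - M.mulVec G) ≤ norm2 (v - M.mulVec G')) (u : Fin j → ℝ) :
    ∑ i, (v - M.mulVec G) i * M.mulVec u i = 0 := by
  set w : Fin d → ℝ := v - M.mulVec G with hw
  set mu : Fin d → ℝ := M.mulVec u with hmu
  set c : ℝ := ∑ i, w i * mu i with hc
  set K : ℝ := ∑ i, mu i ^ 2 with hK
  have hK0 : 0 ≤ K := by positivity
  have key : ∀ t : ℝ, 0 ≤ -2*t*c + t^2*K := by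
    intro t
    have h2 : M.mulVec (G + t • u) = M.mulVec G + t • mu := by
      rw [Matrix.mulVec_add, Matrix.mulVec_smul]
    have h3 : v - M.mulVec (G + t • u) = fun i => w i - t * mu i := by
      funext i
      simp [h2, hw, sub_sub]
    have h4 : ∑ i, w i ^ 2 ≤ ∑ i, (w i - t * mu i) ^ 2 := by
      have h5 := h (G + t • u)
      rw [h3] at h5
      simpa [norm2] using sumsq_le_of_norm2_le h5
    have expand : ∑ i, (w i - t * mu i) ^ 2
        = (∑ i, w i ^ 2) + ((-2*t) * ∑ i, w i * mu i) + t^2 * ∑ i, mu i ^ 2 := by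
      rw [Finset.mul_sum, Finset.mul_sum, ← Finset.sum_add_distrib, ← Finset.sum_add_distrib]
      exact Finset.sum_congr rfl fun i _ => by ring
    rw [expand, ← hc, ← hK] at h4
    linarith
  have hK1 : (0:ℝ) < K + 1 := by linarith
  have h5 := key (c / (K+1))
  have ht : c / (K+1) * (K+1) = c := div_mul_cancel₀ c (by linarith)
  set t : ℝ := c / (K+1) with htt
  rw [← ht] at h5
  have h6 : t = 0 := by nlinarith [sq_nonneg t]
  rw [← ht, h6]
  ring

lemma posdef_dot {d : ℕ} {A : Matrix (Fin d) (Fin d) ℝ} (hA : A.PosDef) {w : Fin d → ℝ}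
    (h : ∑ i, w i * A.mulVec w i = 0) : w = 0 := by
  by_contra hne
  have := hA.dotProduct_mulVec_pos hne
  rw [show star w = w from rfl] at this
  simp only [dotProduct] at this
  rw [h] at this
  exact lt_irrefl 0 this

lemma mulVec_inj {d : ℕ} {A : Matrix (Fin d) (Fin d) ℝ} (hA : A.PosDef) {w : Fin d → ℝ}
    (h : A.mulVec w = 0) : w = 0 := by
  apply posdef_dot hA
  rw [h]
  simp

lemma diffMat_resid {d : ℕ} (A : Matrix (Fin d) (Fin d) ℝ) (b : Fin d → ℝ)
    (x : ℕ → Fin d → ℝ) (j : ℕ) :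
    diffMat (fun i => resid A b (x i)) j = (-A) * diffMat x j := by
  ext i l
  simp only [diffMat, of_apply, resid, Pi.sub_apply, Matrix.mulVec, dotProduct,
    Matrix.mul_apply, Matrix.neg_apply]
  have h := Finset.sum_congr rfl fun m (_ : m ∈ Finset.univ) =>
    (by ring : -A i m * (x (↑l + 1) m - x (↑l) m) = A i m * x (↑l) m - A i m * x (↑l + 1) m)
  rw [h, Finset.sum_sub_distrib]
  ring

lemma norm2_zero_vec {n : ℕ} {v : Fin n → ℝ} (h : norm2 v ≤ 0) : v = 0 := by
  have h1 : (0:ℝ) ≤ ∑ i, v i ^ 2 := by positivity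
  have h2 : ∑ i, v i ^ 2 ≤ 0 := by
    have := Real.sqrt_eq_zero'.mp (le_antisymm h (Real.sqrt_nonneg _))
    exact this
  have h3 : ∑ i, v i ^ 2 = 0 := le_antisymm h2 h1
  funext i
  have := (Finset.sum_eq_zero_iff_of_nonneg (fun i _ => sq_nonneg (v i))).mp h3 i (Finset.mem_univ i)
  exact pow_eq_zero_iff (by norm_num) |>.mp this

/-- **Proposition 2** (stagnation of Anderson mixing upon rank deficiency): if
`rank R_j = j` for `1 ≤ j < s` but `rank R_s < s`, then for every minimizer `Γ_s` of
`Γ ↦ ‖r_s − R_sΓ‖₂` one has `x_s − X_sΓ_s = x̄_{s−1}`; in particular `x̄_s = x̄_{s−1}`. -/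
theorem anderson_mixing_stagnation (d : ℕ) (hd : 1 ≤ d)
    (A : Matrix (Fin d) (Fin d) ℝ) (hA : A.PosDef)
    (b x0 : Fin d → ℝ)
    (x : ℕ → Fin d → ℝ) (Γ : (j : ℕ) → Fin j → ℝ)
    (hx0 : x 0 = x0)
    (hx1 : x 1 = x 0 + resid A b (x 0))
    (hΓ : ∀ j : ℕ, ∀ G : Fin j → ℝ,
      norm2 (resid A b (x j) - (diffMat (fun i => resid A b (x i)) j).mulVec (Γ j)) ≤
        norm2 (resid A b (x j) - (diffMat (fun i => resid A b (x i)) j).mulVec G))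
    (hrec : ∀ j : ℕ, 1 ≤ j →
      x (j + 1) = x j + resid A b (x j)
        - (diffMat x j + diffMat (fun i => resid A b (x i)) j).mulVec (Γ j))
    (s : ℕ) (hs : 1 < s)
    (hrank : ∀ j : ℕ, 1 ≤ j → j < s → (diffMat (fun i => resid A b (x i)) j).rank = j)
    (hdef : (diffMat (fun i => resid A b (x i)) s).rank < s) :
    (∀ G : Fin s → ℝ,
      (∀ G' : Fin s → ℝ,
        norm2 (resid A b (x s) - (diffMat (fun i => resid A b (x i)) s).mulVec G) ≤
          norm2 (resid A b (x s) - (diffMat (fun i => resid A b (x i)) s).mulVec G')) →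
      x s - (diffMat x s).mulVec G = x (s - 1) - (diffMat x (s - 1)).mulVec (Γ (s - 1))) ∧
    x s - (diffMat x s).mulVec (Γ s)
      = x (s - 1) - (diffMat x (s - 1)).mulVec (Γ (s - 1)) := by
  obtain ⟨k, rfl⟩ : ∃ k, s = k + 1 := ⟨s - 1, by omega⟩
  have hk : 1 ≤ k := by omega
  set rr : ℕ → Fin d → ℝ := fun i => resid A b (x i) with hrr
  set Rk : Matrix (Fin d) (Fin k) ℝ := diffMat rr k with hRk
  set Rs : Matrix (Fin d) (Fin (k+1)) ℝ := diffMat rr (k+1) with hRs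
  set Xk : Matrix (Fin d) (Fin k) ℝ := diffMat x k with hXk
  set Xs : Matrix (Fin d) (Fin (k+1)) ℝ := diffMat x (k+1) with hXs
  -- R_j = -A X_j as linear maps
  have hAX : ∀ (j : ℕ) (v : Fin j → ℝ),
      (diffMat rr j).mulVec v = -(A.mulVec ((diffMat x j).mulVec v)) := by
    intro j v
    rw [show diffMat rr j = diffMat (fun i => resid A b (x i)) j from rfl,
      diffMat_resid, ← Matrix.mulVec_mulVec, Matrix.neg_mulVec]
  -- the projected residual at step k
  set w : Fin d → ℝ := rr k - Rk.mulVec (Γ k) with hw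
  have orth : ∀ u : Fin k → ℝ, ∑ i, w i * Rk.mulVec u i = 0 :=
    fun u => ls_orth Rk (rr k) (Γ k) (hΓ k) u
  have hx_next : x (k+1) = (x k - Xk.mulVec (Γ k)) + w := by
    rw [hrec k hk, Matrix.add_mulVec, hw]
    simp only [hXk, hRk, hrr]
    abel_nf
  have hr_next : rr (k+1) = w - A.mulVec w := by
    have hxkv : A.mulVec (Xk.mulVec (Γ k)) = -(Rk.mulVec (Γ k)) := by
      rw [hAX k (Γ k), neg_neg]
    show resid A b (x (k+1)) = w - A.mulVec w
    rw [hx_next]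
    unfold resid
    rw [Matrix.mulVec_add, Matrix.mulVec_sub, hxkv, hw]
    have hb : rr k = b - A.mulVec (x k) := rfl
    rw [hb]
    abel
  -- rank deficiency: the last column of R_{k+1} lies in the column span of R_k
  have hcols : Set.range Rkᵀ ⊆ Set.range Rsᵀ := by
    rintro _ ⟨l, rfl⟩
    exact ⟨⟨(l : ℕ), by omega⟩, rfl⟩
  have h1 : Module.finrank ℝ (Submodule.span ℝ (Set.range Rkᵀ)) = k := by
    rw [show Set.range Rkᵀ = Set.range (Matrix.col Rk) from rfl, ← Matrix.rank_eq_finrank_span_cols]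
    exact hrank k hk (by omega)
  have h2 : Module.finrank ℝ (Submodule.span ℝ (Set.range Rsᵀ)) ≤ k := by
    rw [show Set.range Rsᵀ = Set.range (Matrix.col Rs) from rfl, ← Matrix.rank_eq_finrank_span_cols]
    omega
  have heq : Submodule.span ℝ (Set.range Rkᵀ) = Submodule.span ℝ (Set.range Rsᵀ) :=
    Submodule.eq_of_le_of_finrank_le (Submodule.span_mono hcols) (by rw [h1]; exact h2)
  have hmem : Rsᵀ (Fin.last k) ∈ Submodule.span ℝ (Set.range Rkᵀ) := by
    rw [heq]
    exact Submodule.subset_span ⟨Fin.last k, rfl⟩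
  rw [show Set.range Rkᵀ = Set.range (Matrix.col Rk) from rfl, ← Matrix.range_mulVecLin] at hmem
  obtain ⟨γ, hγ⟩ := hmem
  have hγ' : Rk.mulVec γ = rr (k+1) - rr k := by
    have : Rsᵀ (Fin.last k) = rr (k+1) - rr k := by
      funext i
      simp [hRs, diffMat, Fin.val_last]
    rw [← this, ← hγ]
    rfl
  -- A w lies in the range of R_k, hence ⟨w, A w⟩ = 0, hence w = 0
  have hAw : A.mulVec w = Rk.mulVec (-γ - Γ k) := by
    have e1 : Rk.mulVec (-γ - Γ k) = -(rr (k+1) - rr k) - Rk.mulVec (Γ k) := by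
      rw [Matrix.mulVec_sub, Matrix.mulVec_neg, hγ']
    have e2 : A.mulVec w = w - rr (k+1) := by
      rw [hr_next]; abel
    rw [e1, e2, hw, hr_next, hw]
    abel
  have hw0 : w = 0 := posdef_dot hA (by rw [hAw]; exact orth _)
  have hxk1 : x (k+1) = x k - Xk.mulVec (Γ k) := by
    rw [hx_next, hw0, add_zero]
  have hrk1 : rr (k+1) = 0 := by
    rw [hr_next, hw0, Matrix.mulVec_zero, sub_zero]
  -- the main stagnation statement
  have main : ∀ G : Fin (k+1) → ℝ,
      (∀ G' : Fin (k+1) → ℝ,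
        norm2 (resid A b (x (k+1)) - Rs.mulVec G) ≤
          norm2 (resid A b (x (k+1)) - Rs.mulVec G')) →
      x (k+1) - Xs.mulVec G = x k - Xk.mulVec (Γ k) := by
    intro G hG
    have h0 : norm2 (rr (k+1) - Rs.mulVec G) ≤ 0 := by
      have h5 := hG 0
      rw [Matrix.mulVec_zero] at h5
      have : norm2 (resid A b (x (k+1)) - 0) = 0 := by
        show norm2 (rr (k+1) - 0) = 0
        rw [hrk1, sub_zero]
        simp [norm2]
      rw [this] at h5
      exact h5
    have hz : rr (k+1) - Rs.mulVec G = 0 := norm2_zero_vec h0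
    rw [hrk1, zero_sub, neg_eq_zero] at hz
    have hXsG : Xs.mulVec G = 0 := by
      apply mulVec_inj hA
      have h6 := hAX (k+1) G
      rw [show diffMat rr (k+1) = Rs from rfl, show diffMat x (k+1) = Xs from rfl, hz] at h6
      rw [← neg_eq_zero, ← h6]
    rw [hXsG, sub_zero, hxk1]
  constructor
  · intro G hG
    simp only [Nat.add_sub_cancel]
    exact main G hG
  · simp only [Nat.add_sub_cancel]
    exact main (Γ (k+1)) (hΓ (k+1))
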